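/- Let ∇R be a 5-tensor with the curvature symmetries satisfying ∇R(x,y,y,w;y)=0 for all x,y,w. Then 0 = 2∇R(x,y,w,x;y) - ∇R(x,y,y,x;w) for all w,x,y (polarization of the Szabó condition combined with the curvature symmetries). -/

import Mathlib

/-- Polarizing `∇R(x,y,y,w;y) = 0` and using the curvature symmetries yields
`0 = 2∇R(x,y,w,x;y) - ∇R(x,y,y,x;w)`. -/
theorem szabo_polarization_identity
    (V : Type*) [AddCommGroup V] [Module ℝ V]
    (nR : V →ₗ[ℝ] V →ₗ[ℝ] V →ₗ[ℝ] V →ₗ[ℝ] V →ₗ[ℝ] ℝ)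
    (hnR1 : ∀ a b c d e, nR a b c d e = - nR b a c d e)
    (hnR2 : ∀ a b c d e, nR a b c d e = nR c d a b e)
    (hnR3 : ∀ a b c d e, nR a b c d e + nR a c d b e + nR a d b c e = 0)
    (hnR4 : ∀ a b c d e, nR a b c d e + nR a b d e c + nR a b e c d = 0)
    (hS : ∀ x y w, nR x y y w y = 0) :
    ∀ w x y : V, 0 = 2 * nR x y w x y - nR x y y x w := by
  -- antisymmetry in first pair gives vanishing
  have zero1 : ∀ a c d e, nR a a c d e = (0:ℝ) := by
    intro a c d e; have := hnR1 a a c d e; linarith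
  -- antisymmetry in second pair gives vanishing
  have zero2 : ∀ a b c e, nR a b c c e = (0:ℝ) := by
    intro a b c e
    have h := hnR2 a b c c e
    have h2 := zero1 c a b e
    have h3 := hnR2 c c a b e
    -- nR c c a b e = 0 and nR a b c c e = nR c c a b e
    rw [h3] at h2
    -- h2 : nR a b c c e = 0? no: h2 : nR c c a b e = 0 rewritten; fix below
    linarith [h, h2]
  -- polarization of hS
  have P : ∀ a b c d, nR a d b c b + nR a b d c b + nR a b b c d = 0 := by
    intro a b c d
    have h1 := hS a (b + d) c
    have h2 := hS a (b - d) c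
    rw [sub_eq_add_neg, ← neg_one_smul ℝ d] at h2
    simp only [map_add, map_sub, map_smul, LinearMap.add_apply, LinearMap.sub_apply, LinearMap.smul_apply, smul_eq_mul] at h1 h2
    linarith [hS a b c, hS a d c]
  intro w x y
  -- atoms: A = nR x y w x y, B = nR x y y x w, C = nR x w y x y,
  -- D = nR x y x w y, E = nR x y y w x, F = nR x y w y x
  have e1 := P x y x w      -- C + A + B = 0
  have e2 := hnR3 x w y x y -- C + D + nR x x w y y = 0
  have e3 := P x y w x      -- nR x x y w y + D + E = 0
  have e4 := hnR4 x y y x w -- B + D + F = 0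
  have e5 := hnR3 x y y w x -- E + F + nR x w y y x = 0
  have e6 := P w y x x      -- nR w x y x y + nR w y x x y + nR w y y x x = 0
  have z1 := zero1 x w y y
  have z2 := zero1 x y w y
  -- nR x w y y x = nR y y x w x = 0
  have z3 : nR x w y y x = 0 := by rw [hnR2]; exact zero1 y x w x
  have z4 := zero2 w y x y
  -- nR w x y x y = - nR x y w x y
  have r1 : nR w x y x y = - nR x y w x y := by rw [hnR2 w x y x y]; exact hnR1 y x w x y
  -- nR w y y x x = - nR x y w y x
  have r2 : nR w y y x x = - nR x y w y x := by
    rw [hnR2 w y y x x, hnR1 y x w y x]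
  linarith
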